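/- Let L be a nonempty set, C a finite consequence operator on L, and RI* the logic-system defined from C (with R¹ = C(∅) and, for each nonempty finite X = {x₁,…,xₙ} ⊆ L with C(X) ≠ X ∪ R¹, the tuples (x₁,…,xₙ,y) for y ∈ C(X) − (X ∪ R¹)). Then for every X ⊆ L and every x ∈ C(X), x is deducible from X via RI*; that is, C(X) ⊆ C*(X), where C* is the operator generated by RI*. -/
import Mathlib


/-!
A general logic-system `RI` on a language `L` is encoded as a set of nonempty
lists over `L`: a list `[a₁, …, aₙ]` with `n ≥ 2` is an `n`-ary rule allowing the
deduction of `aₙ` once `a₁, …, a_{n-1}` have been obtained, and a singleton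
`[a]` records that `a` is a member of a unary relation, i.e. an axiom.
(A collection of `n`-ary relations `Rⁿ ⊆ Lⁿ` is identified with the set of all
its tuples, encoded as lists.)
-/

/-- `bs = [b₁, …, b_m]` is an `RI`-deduction from `X`: each step `b_j` is in `X`,
or is an axiom (member of a unary relation of `RI`), or is the last coordinate
of a tuple `(a₁, …, aₙ) ∈ RI` whose first `n-1` coordinates all lie in `X`
together with the axioms and the previous steps `b₁, …, b_{j-1}`. -/
def IsDeduction {L : Type*} (RI : Set (List L)) (X : Set L) (bs : List L) : Prop :=
  ∀ j : Fin bs.length,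
    bs.get j ∈ X ∨ [bs.get j] ∈ RI ∨
      ∃ l : List L, l ≠ [] ∧ l ++ [bs.get j] ∈ RI ∧
        ∀ b ∈ l, b ∈ X ∨ [b] ∈ RI ∨ b ∈ bs.take j.1

/-- The operator generated by the logic-system `RI`: it sends `X ⊆ L` to the set
of all elements of `L` deducible from `X` by a finite-step `RI`-deduction. -/
def genOp {L : Type*} (RI : Set (List L)) (X : Set L) : Set L :=
  {a | ∃ bs : List L, IsDeduction RI X bs ∧ a ∈ bs}

/-- The logic-system `RI*` defined from an operator `C`: its unary relation is
`R¹ = C(∅)`, and for each nonempty finite `X ⊆ L` with `|X| = n` and each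
enumeration `X = {x₁, …, xₙ}` (a nodup list `xs`), it contains the
`(n+1)`-tuples `(x₁, …, xₙ, y)` for `y ∈ C(X) − (X ∪ R¹)` (so when
`C(X) = X ∪ R¹` no tuple arises from `X`, i.e. the relation is `∅` there). -/
def RIstar {L : Type*} (C : Set L → Set L) : Set (List L) :=
  {l | ∃ a ∈ C ∅, l = [a]} ∪
    {l | ∃ (xs : List L) (y : L), xs ≠ [] ∧ xs.Nodup ∧
      y ∈ C {x | x ∈ xs} \ ({x | x ∈ xs} ∪ C ∅) ∧ l = xs ++ [y]}

/-- If `C` is a finite consequence operator on `L`, then every `x ∈ C(X)` is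
deducible from `X` via the logic-system `RI*` defined from `C`; that is,
`C(X) ⊆ C*(X)` where `C*` is the operator generated by `RI*`. -/
theorem stmt8 {L : Type*} [Nonempty L] (C : Set L → Set L)
    (h_incl : ∀ X : Set L, X ⊆ C X)
    (h_idem : ∀ X : Set L, C (C X) = C X)
    (h_mono : ∀ X Y : Set L, X ⊆ Y → C X ⊆ C Y)
    (h_fin : ∀ X : Set L, C X = ⋃ A ∈ {A : Set L | A ⊆ X ∧ A.Finite}, C A) :
    ∀ X : Set L, C X ⊆ genOp (RIstar C) X := by
  intro X x hx
  rw [h_fin] at hx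
  simp only [Set.mem_iUnion, Set.mem_setOf_eq] at hx
  obtain ⟨A, ⟨hAX, hAfin⟩, hxA⟩ := hx
  by_cases hxX : x ∈ X
  · exact ⟨[x], fun j => Or.inl (by simpa using hxX), by simp⟩
  by_cases hx0 : x ∈ C ∅
  · exact ⟨[x], fun j => Or.inr (Or.inl (Or.inl ⟨x, hx0, by simp⟩)), by simp⟩
  set xs : List L := hAfin.toFinset.toList with hxs
  have hset : {a | a ∈ xs} = A := by
    ext a
    simp [hxs, Set.Finite.mem_toFinset]
  have hne : xs ≠ [] := by
    intro h
    apply hx0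
    have : A = (∅ : Set L) := by rw [← hset, h]; simp
    rw [← this]; exact hxA
  refine ⟨[x], fun j => Or.inr (Or.inr ⟨xs, hne, ?_, ?_⟩), by simp⟩
  · refine Or.inr ⟨xs, x, hne, hAfin.toFinset.nodup_toList, ?_, by simp⟩
    rw [hset]
    exact ⟨hxA, fun h => h.elim (fun h => hxX (hAX h)) hx0⟩
  · intro b hb
    exact Or.inl (hAX (hset ▸ hb))
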